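/- arXiv:1109.1919 — 2 statements merged into one kernel-verified Lean document; each statement's English description precedes it below -/
import Mathlib

section
/- Inverse of a gauge transformation: if (f, c) : (x, g, a) → (x', g', a') is a gauge transformation between descent data in a cosimplicial crossed groupoid G, then (f⁻¹, Ad(f_{(0)})(c⁻¹)) is a gauge transformation (x', g', a') → (x, g, a). -/
/-! Crossed groupoids (= crossed modules over groupoids), following Yekutieli,
"Combinatorial descent data for gerbes". -/

structure CrossedGroupoid : Type 1 where
  Obj : Type
  Hom : Obj → Obj → Type
  id : ∀ x, Hom x x
  comp : ∀ {x y z}, Hom y z → Hom x y → Hom x z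
  inv : ∀ {x y}, Hom x y → Hom y x
  comp_assoc : ∀ {x y z w} (h : Hom z w) (g : Hom y z) (f : Hom x y),
    comp (comp h g) f = comp h (comp g f)
  id_comp : ∀ {x y} (f : Hom x y), comp (id y) f = f
  comp_id : ∀ {x y} (f : Hom x y), comp f (id x) = f
  inv_comp : ∀ {x y} (f : Hom x y), comp (inv f) f = id x
  comp_inv : ∀ {x y} (f : Hom x y), comp f (inv f) = id y
  -- the totally disconnected groupoid 𝒢₂, i.e. a family of groups
  G2 : Obj → Type
  mul : ∀ {x}, G2 x → G2 x → G2 x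
  one : ∀ x, G2 x
  inv2 : ∀ {x}, G2 x → G2 x
  mul_assoc : ∀ {x} (a b c : G2 x), mul (mul a b) c = mul a (mul b c)
  one_mul : ∀ {x} (a : G2 x), mul (one x) a = a
  mul_one : ∀ {x} (a : G2 x), mul a (one x) = a
  inv2_mul : ∀ {x} (a : G2 x), mul (inv2 a) a = one x
  -- the twisting: an action of 𝒢₁ on 𝒢₂
  Ad : ∀ {x y}, Hom x y → G2 x → G2 y
  Ad_mul : ∀ {x y} (g : Hom x y) (a b : G2 x), Ad g (mul a b) = mul (Ad g a) (Ad g b)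
  Ad_one : ∀ {x y} (g : Hom x y), Ad g (one x) = one y
  Ad_id : ∀ {x} (a : G2 x), Ad (id x) a = a
  Ad_comp : ∀ {x y z} (h : Hom y z) (g : Hom x y) (a : G2 x),
    Ad (comp h g) a = Ad h (Ad g a)
  -- the feedback D : 𝒢₂ → 𝒢₁, identity on objects
  D : ∀ {x}, G2 x → Hom x x
  D_mul : ∀ {x} (a b : G2 x), D (mul a b) = comp (D a) (D b)
  D_one : ∀ x, D (one x) = id x
  -- equivariance of the feedback
  D_Ad : ∀ {x y} (g : Hom x y) (a : G2 x), D (Ad g a) = comp (comp g (D a)) (inv g)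
  -- Peiffer condition
  peiffer : ∀ {x} (a b : G2 x), Ad (D a) b = mul (mul a b) (inv2 a)

namespace CrossedGroupoid

/-- Transport of 1-morphisms along equalities of objects. -/
def hcast (G : CrossedGroupoid) {x x' y y' : G.Obj} (ex : x = x') (ey : y = y')
    (f : G.Hom x y) : G.Hom x' y' := ey ▸ ex ▸ f

/-- Transport of 2-morphisms along an equality of objects. -/
def cast2 (G : CrossedGroupoid) {x x' : G.Obj} (e : x = x') (a : G.G2 x) : G.G2 x' := e ▸ a

/-- The relation "isomorphic in 𝒢₁". -/
def pi0Rel (G : CrossedGroupoid) : G.Obj → G.Obj → Prop := fun x y => Nonempty (G.Hom x y)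

/-- π₀ of a crossed groupoid: isomorphism classes of objects of 𝒢₁. -/
def pi0 (G : CrossedGroupoid) : Type := Quot G.pi0Rel

/-- The right action relation on a hom-set: g' = g ∘ D(a). -/
def homRel (G : CrossedGroupoid) (x x' : G.Obj) : G.Hom x x' → G.Hom x x' → Prop :=
  fun g g' => ∃ a : G.G2 x, g' = G.comp g (G.D a)

/-- π₁(G, x, x') := 𝒢₁(x,x') / 𝒢₂(x). -/
def pi1' (G : CrossedGroupoid) (x x' : G.Obj) : Type := Quot (G.homRel x x')

/-- π₁(G, x) = Coker(D : 𝒢₂(x) → 𝒢₁(x)) as a quotient set. -/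
def pi1 (G : CrossedGroupoid) (x : G.Obj) : Type := G.pi1' x x

/-- π₂(G, x) = Ker(D : 𝒢₂(x) → 𝒢₁(x)). -/
def pi2 (G : CrossedGroupoid) (x : G.Obj) : Type := {a : G.G2 x // G.D a = G.id x}

end CrossedGroupoid

/-- A morphism of crossed groupoids. -/
structure CrossedGroupoidHom (G H : CrossedGroupoid) where
  obj : G.Obj → H.Obj
  map1 : ∀ {x y : G.Obj}, G.Hom x y → H.Hom (obj x) (obj y)
  map2 : ∀ {x : G.Obj}, G.G2 x → H.G2 (obj x)
  map1_comp : ∀ {x y z : G.Obj} (g : G.Hom y z) (f : G.Hom x y),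
    map1 (G.comp g f) = H.comp (map1 g) (map1 f)
  map1_id : ∀ x : G.Obj, map1 (G.id x) = H.id (obj x)
  map2_mul : ∀ {x : G.Obj} (a b : G.G2 x), map2 (G.mul a b) = H.mul (map2 a) (map2 b)
  map_D : ∀ {x : G.Obj} (a : G.G2 x), map1 (G.D a) = H.D (map2 a)
  map_Ad : ∀ {x y : G.Obj} (g : G.Hom x y) (a : G.G2 x),
    map2 (G.Ad g a) = H.Ad (map1 g) (map2 a)

namespace CrossedGroupoidHom

/-- Identity morphism of crossed groupoids. -/
def id (G : CrossedGroupoid) : CrossedGroupoidHom G G where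
  obj := fun x => x
  map1 := fun f => f
  map2 := fun a => a
  map1_comp := fun _ _ => rfl
  map1_id := fun _ => rfl
  map2_mul := fun _ _ => rfl
  map_D := fun _ => rfl
  map_Ad := fun _ _ => rfl

/-- Composition of morphisms of crossed groupoids. -/
def comp {G H K : CrossedGroupoid} (F₂ : CrossedGroupoidHom H K) (F₁ : CrossedGroupoidHom G H) :
    CrossedGroupoidHom G K where
  obj := fun x => F₂.obj (F₁.obj x)
  map1 := fun f => F₂.map1 (F₁.map1 f)
  map2 := fun a => F₂.map2 (F₁.map2 a)
  map1_comp := fun g f => by (try dsimp only); rw [F₁.map1_comp, F₂.map1_comp]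
  map1_id := fun x => by (try dsimp only); rw [F₁.map1_id, F₂.map1_id]
  map2_mul := fun a b => by (try dsimp only); rw [F₁.map2_mul, F₂.map2_mul]
  map_D := fun a => by (try dsimp only); rw [F₁.map_D, F₂.map_D]
  map_Ad := fun g a => by (try dsimp only); rw [F₁.map_Ad, F₂.map_Ad]

variable {G H : CrossedGroupoid}

/-- The induced map on π₀. -/
def pi0map (F : CrossedGroupoidHom G H) : G.pi0 → H.pi0 :=
  Quot.map F.obj (fun _ _ h => ⟨F.map1 h.some⟩)

/-- The induced map on π₁(−, x, x'). -/
def pi1'map (F : CrossedGroupoidHom G H) (x x' : G.Obj) :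
    G.pi1' x x' → H.pi1' (F.obj x) (F.obj x') :=
  Quot.map F.map1 (by
    rintro g g' ⟨a, rfl⟩
    exact ⟨F.map2 a, by rw [F.map1_comp, F.map_D]⟩)

/-- The induced map on π₁(−, x). -/
def pi1map (F : CrossedGroupoidHom G H) (x : G.Obj) : G.pi1 x → H.pi1 (F.obj x) :=
  F.pi1'map x x

/-- The induced map on π₂(−, x). -/
def pi2map (F : CrossedGroupoidHom G H) (x : G.Obj) : G.pi2 x → H.pi2 (F.obj x) :=
  fun a => ⟨F.map2 a.1, by rw [← F.map_D, a.2, F.map1_id]⟩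

/-- A weak equivalence of crossed groupoids: bijective on π₀, π₁ and π₂. -/
def IsWeakEquiv (F : CrossedGroupoidHom G H) : Prop :=
  Function.Bijective F.pi0map ∧ (∀ x, Function.Bijective (F.pi1map x)) ∧
    (∀ x, Function.Bijective (F.pi2map x))

end CrossedGroupoidHom

/-! ### Combinatorics of the simplex category -/

/-- The vertex (i) of Δ^q, as a monotone map Δ⁰ → Δ^q. -/
def vtxMap {q : ℕ} (i : Fin (q + 1)) : Fin 1 →o Fin (q + 1) :=
  ⟨fun _ => i, fun _ _ _ => le_rfl⟩

/-- The edge (i,j) of Δ^q, as a monotone map Δ¹ → Δ^q. -/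
def edgeMap {q : ℕ} (i j : Fin (q + 1)) (h : i ≤ j) : Fin 2 →o Fin (q + 1) :=
  ⟨fun k => if (k : ℕ) = 0 then i else j, by
    intro a b hab
    have hab' : (a : ℕ) ≤ (b : ℕ) := hab
    show (if (a : ℕ) = 0 then i else j) ≤ (if (b : ℕ) = 0 then i else j)
    by_cases ha : (a : ℕ) = 0
    · by_cases hb : (b : ℕ) = 0
      · rw [if_pos ha, if_pos hb]
      · rw [if_pos ha, if_neg hb]; exact h
    · have hb : ¬ (b : ℕ) = 0 := fun hb0 => ha (Nat.le_zero.mp (hb0 ▸ hab'))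
      rw [if_neg ha, if_neg hb]⟩

/-- The triangle (i,j,k) of Δ^q, as a monotone map Δ² → Δ^q. -/
def triMap {q : ℕ} (i j k : Fin (q + 1)) (hij : i ≤ j) (hjk : j ≤ k) :
    Fin 3 →o Fin (q + 1) :=
  ⟨fun m => if (m : ℕ) = 0 then i else if (m : ℕ) = 1 then j else k, by
    intro a b hab
    have hab' : (a : ℕ) ≤ (b : ℕ) := hab
    show (if (a : ℕ) = 0 then i else if (a : ℕ) = 1 then j else k) ≤
      (if (b : ℕ) = 0 then i else if (b : ℕ) = 1 then j else k)
    by_cases ha0 : (a : ℕ) = 0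
    · by_cases hb0 : (b : ℕ) = 0
      · rw [if_pos ha0, if_pos hb0]
      · by_cases hb1 : (b : ℕ) = 1
        · rw [if_pos ha0, if_neg hb0, if_pos hb1]; exact hij
        · rw [if_pos ha0, if_neg hb0, if_neg hb1]; exact hij.trans hjk
    · by_cases ha1 : (a : ℕ) = 1
      · have hb0 : ¬ (b : ℕ) = 0 := by omega
        by_cases hb1 : (b : ℕ) = 1
        · rw [if_neg ha0, if_pos ha1, if_neg hb0, if_pos hb1]
        · rw [if_neg ha0, if_pos ha1, if_neg hb0, if_neg hb1]; exact hjk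
      · have hb0 : ¬ (b : ℕ) = 0 := by omega
        have hb1 : ¬ (b : ℕ) = 1 := by omega
        rw [if_neg ha0, if_neg ha1, if_neg hb0, if_neg hb1]⟩

theorem comp_vtxMap {p q : ℕ} (α : Fin (p + 1) →o Fin (q + 1)) (i : Fin (p + 1)) :
    α.comp (vtxMap i) = vtxMap (α i) := rfl

/-! ### Cosimplicial crossed groupoids -/

/-- A cosimplicial crossed groupoid: a functor Δ → CrGrpd. -/
structure CosimplicialCrossedGroupoid : Type 1 where
  obj : ℕ → CrossedGroupoid
  map : ∀ {p q : ℕ}, (Fin (p + 1) →o Fin (q + 1)) → CrossedGroupoidHom (obj p) (obj q)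
  map_id : ∀ p, map (OrderHom.id : Fin (p + 1) →o Fin (p + 1)) = CrossedGroupoidHom.id (obj p)
  map_comp : ∀ {p q r : ℕ} (β : Fin (q + 1) →o Fin (r + 1)) (α : Fin (p + 1) →o Fin (q + 1)),
    map (β.comp α) = (map β).comp (map α)

namespace CosimplicialCrossedGroupoid

variable (G : CosimplicialCrossedGroupoid)

theorem obj_comp {p q r : ℕ} (β : Fin (q + 1) →o Fin (r + 1)) (α : Fin (p + 1) →o Fin (q + 1))
    (x : (G.obj p).Obj) :
    (G.map β).obj ((G.map α).obj x) = (G.map (β.comp α)).obj x := by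
  rw [G.map_comp]; rfl

/-- The object x of G⁰ pushed to the vertex (i) of Δ^q. -/
def X (x : (G.obj 0).Obj) (q : ℕ) (i : Fin (q + 1)) : (G.obj q).Obj :=
  (G.map (vtxMap i)).obj x

theorem X_push (x : (G.obj 0).Obj) {p q : ℕ} (α : Fin (p + 1) →o Fin (q + 1))
    (i : Fin (p + 1)) : (G.map α).obj (G.X x p i) = G.X x q (α i) := by
  unfold X
  rw [obj_comp, comp_vtxMap]

/-- Pushing a 1-morphism between vertex objects along α. -/
def push1 {x : (G.obj 0).Obj} {p q : ℕ} (α : Fin (p + 1) →o Fin (q + 1))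
    {i j : Fin (p + 1)} (g : (G.obj p).Hom (G.X x p i) (G.X x p j)) :
    (G.obj q).Hom (G.X x q (α i)) (G.X x q (α j)) :=
  (G.obj q).hcast (G.X_push x α i) (G.X_push x α j) ((G.map α).map1 g)

/-- Pushing a 2-morphism at a vertex object along α. -/
def push2 {x : (G.obj 0).Obj} {p q : ℕ} (α : Fin (p + 1) →o Fin (q + 1))
    {i : Fin (p + 1)} (a : (G.obj p).G2 (G.X x p i)) :
    (G.obj q).G2 (G.X x q (α i)) :=
  (G.obj q).cast2 (G.X_push x α i) ((G.map α).map2 a)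

/-- Yekutieli's combinatorial descent conditions (Definition 1.5):
the failure-of-1-cocycle condition and the twisted 2-cocycle condition. -/
def IsDescent (x : (G.obj 0).Obj)
    (g : (G.obj 1).Hom (G.X x 1 0) (G.X x 1 1))
    (a : (G.obj 2).G2 (G.X x 2 0)) : Prop :=
  ((G.obj 2).comp ((G.obj 2).comp ((G.obj 2).inv (G.push1 (edgeMap 0 2 (by decide)) g))
      (G.push1 (edgeMap 1 2 (by decide)) g)) (G.push1 (edgeMap 0 1 (by decide)) g)
    = (G.obj 2).D a)
  ∧
  ((G.obj 3).mul ((G.obj 3).mul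
        ((G.obj 3).inv2 (G.push2 (triMap 0 1 3 (by decide) (by decide)) a))
        (G.push2 (triMap 0 2 3 (by decide) (by decide)) a))
      (G.push2 (triMap 0 1 2 (by decide) (by decide)) a)
    = (G.obj 3).Ad ((G.obj 3).inv (G.push1 (edgeMap 0 1 (by decide)) g))
        (G.push2 (triMap 1 2 3 (by decide) (by decide)) a))

/-- A combinatorial descent datum (Definition 1.5). -/
structure Desc (G : CosimplicialCrossedGroupoid) where
  x : (G.obj 0).Obj
  g : (G.obj 1).Hom (G.X x 1 0) (G.X x 1 1)
  a : (G.obj 2).G2 (G.X x 2 0)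
  isDescent : G.IsDescent x g a

/-- The Yekutieli gauge-transformation conditions (Definition 1.7) for a pair (f, c). -/
def IsGauge (x : (G.obj 0).Obj) (g : (G.obj 1).Hom (G.X x 1 0) (G.X x 1 1))
    (a : (G.obj 2).G2 (G.X x 2 0))
    (x' : (G.obj 0).Obj) (g' : (G.obj 1).Hom (G.X x' 1 0) (G.X x' 1 1))
    (a' : (G.obj 2).G2 (G.X x' 2 0))
    (f : (G.obj 0).Hom x x') (c : (G.obj 1).G2 (G.X x 1 0)) : Prop :=
  (g' = (G.obj 1).comp ((G.obj 1).comp ((G.obj 1).comp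
      ((G.map (vtxMap (1 : Fin 2))).map1 f) g) ((G.obj 1).D c))
      ((G.obj 1).inv ((G.map (vtxMap (0 : Fin 2))).map1 f)))
  ∧
  (a' = (G.obj 2).Ad ((G.map (vtxMap (0 : Fin 3))).map1 f)
    ((G.obj 2).mul ((G.obj 2).mul ((G.obj 2).mul
        ((G.obj 2).inv2 (G.push2 (edgeMap 0 2 (by decide)) c)) a)
        ((G.obj 2).Ad ((G.obj 2).inv (G.push1 (edgeMap 0 1 (by decide)) g))
          (G.push2 (edgeMap 1 2 (by decide)) c)))
      (G.push2 (edgeMap 0 1 (by decide)) c)))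

/-- Gauge equivalence of descent data. -/
def GaugeEquiv (P Q : G.Desc) : Prop :=
  ∃ (f : (G.obj 0).Hom P.x Q.x) (c : (G.obj 1).G2 (G.X P.x 1 0)),
    G.IsGauge P.x P.g P.a Q.x Q.g Q.a f c

/-- The explicit formula for the transported 2-morphism a'
(Definition 1.7(ii) / Lemma 1.9). -/
def transportA {x x' : (G.obj 0).Obj} (f : (G.obj 0).Hom x x')
    (g : (G.obj 1).Hom (G.X x 1 0) (G.X x 1 1))
    (a : (G.obj 2).G2 (G.X x 2 0)) (c : (G.obj 1).G2 (G.X x 1 0)) :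
    (G.obj 2).G2 (G.X x' 2 0) :=
  (G.obj 2).Ad ((G.map (vtxMap (0 : Fin 3))).map1 f)
    ((G.obj 2).mul ((G.obj 2).mul ((G.obj 2).mul
        ((G.obj 2).inv2 (G.push2 (edgeMap 0 2 (by decide)) c)) a)
        ((G.obj 2).Ad ((G.obj 2).inv (G.push1 (edgeMap 0 1 (by decide)) g))
          (G.push2 (edgeMap 1 2 (by decide)) c)))
      (G.push2 (edgeMap 0 1 (by decide)) c))

end CosimplicialCrossedGroupoid

/-- A morphism of cosimplicial crossed groupoids. -/
structure CosimplicialMor (G H : CosimplicialCrossedGroupoid) where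
  app : ∀ p, CrossedGroupoidHom (G.obj p) (H.obj p)
  naturality : ∀ {p q : ℕ} (α : Fin (p + 1) →o Fin (q + 1)),
    (app q).comp (G.map α) = (H.map α).comp (app p)

namespace CosimplicialMor

variable {G H : CosimplicialCrossedGroupoid}

theorem app_X (F : CosimplicialMor G H) (x : (G.obj 0).Obj) (q : ℕ) (i : Fin (q + 1)) :
    (F.app q).obj (G.X x q i) = H.X ((F.app 0).obj x) q i :=
  congrFun (congrArg CrossedGroupoidHom.obj (F.naturality (vtxMap i))) x

/-- Image of an object of G⁰. -/
def objD (F : CosimplicialMor G H) (x : (G.obj 0).Obj) : (H.obj 0).Obj := (F.app 0).obj x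

/-- Image of a 1-morphism in dimension 0. -/
def mapF (F : CosimplicialMor G H) {x x' : (G.obj 0).Obj} (f : (G.obj 0).Hom x x') :
    (H.obj 0).Hom (F.objD x) (F.objD x') := (F.app 0).map1 f

/-- Image of the 1-morphism part of a descent datum. -/
def mapG (F : CosimplicialMor G H) {x : (G.obj 0).Obj}
    (g : (G.obj 1).Hom (G.X x 1 0) (G.X x 1 1)) :
    (H.obj 1).Hom (H.X (F.objD x) 1 0) (H.X (F.objD x) 1 1) :=
  (H.obj 1).hcast (F.app_X x 1 0) (F.app_X x 1 1) ((F.app 1).map1 g)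

/-- Image of the 2-morphism part of a descent datum. -/
def mapA (F : CosimplicialMor G H) {x : (G.obj 0).Obj} (a : (G.obj 2).G2 (G.X x 2 0)) :
    (H.obj 2).G2 (H.X (F.objD x) 2 0) :=
  (H.obj 2).cast2 (F.app_X x 2 0) ((F.app 2).map2 a)

/-- Image of the 2-morphism part of a gauge transformation. -/
def mapC (F : CosimplicialMor G H) {x : (G.obj 0).Obj} (c : (G.obj 1).G2 (G.X x 1 0)) :
    (H.obj 1).G2 (H.X (F.objD x) 1 0) :=
  (H.obj 1).cast2 (F.app_X x 1 0) ((F.app 1).map2 c)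

/-- A weak equivalence of cosimplicial crossed groupoids. -/
def IsWeakEquiv (F : CosimplicialMor G H) : Prop := ∀ p, (F.app p).IsWeakEquiv

end CosimplicialMor

/-! ### Auxiliary lemmas for `gauge_inv` -/

namespace CrossedGroupoid

variable (G : CrossedGroupoid)

theorem mul_inv2 {x} (a : G.G2 x) : G.mul a (G.inv2 a) = G.one x := by
  have h1 : G.mul (G.inv2 (G.inv2 a)) (G.inv2 a) = G.one x := G.inv2_mul (G.inv2 a)
  calc G.mul a (G.inv2 a)
      = G.mul (G.one x) (G.mul a (G.inv2 a)) := (G.one_mul _).symm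
    _ = G.mul (G.mul (G.inv2 (G.inv2 a)) (G.inv2 a)) (G.mul a (G.inv2 a)) := by rw [h1]
    _ = G.mul (G.inv2 (G.inv2 a)) (G.mul (G.mul (G.inv2 a) a) (G.inv2 a)) := by
        rw [G.mul_assoc, G.mul_assoc]
    _ = G.mul (G.inv2 (G.inv2 a)) (G.inv2 a) := by rw [G.inv2_mul, G.one_mul]
    _ = G.one x := h1

theorem inv2_mul_cancel {x} (a b : G.G2 x) : G.mul (G.inv2 a) (G.mul a b) = b := by
  rw [← G.mul_assoc, G.inv2_mul, G.one_mul]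

theorem mul_inv2_cancel {x} (a b : G.G2 x) : G.mul a (G.mul (G.inv2 a) b) = b := by
  rw [← G.mul_assoc, G.mul_inv2, G.one_mul]

theorem inv2_inv2 {x} (a : G.G2 x) : G.inv2 (G.inv2 a) = a := by
  rw [← G.mul_one (G.inv2 (G.inv2 a)), ← G.inv2_mul a, ← G.mul_assoc,
    G.inv2_mul, G.one_mul]

theorem inv2_eq_of_mul {x} {a b : G.G2 x} (h : G.mul a b = G.one x) : b = G.inv2 a := by
  rw [← G.one_mul b, ← G.inv2_mul a, G.mul_assoc, h, G.mul_one]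

theorem Ad_inv2 {x y} (g : G.Hom x y) (a : G.G2 x) :
    G.Ad g (G.inv2 a) = G.inv2 (G.Ad g a) := by
  apply G.inv2_eq_of_mul
  rw [← G.Ad_mul, G.mul_inv2, G.Ad_one]

theorem Ad_inv_Ad {x y} (g : G.Hom x y) (a : G.G2 x) :
    G.Ad (G.inv g) (G.Ad g a) = a := by
  rw [← G.Ad_comp, G.inv_comp, G.Ad_id]

theorem Ad_Ad_inv {x y} (g : G.Hom x y) (a : G.G2 y) :
    G.Ad g (G.Ad (G.inv g) a) = a := by
  rw [← G.Ad_comp, G.comp_inv, G.Ad_id]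

theorem inv_inv {x y} (f : G.Hom x y) : G.inv (G.inv f) = f := by
  rw [← G.comp_id (G.inv (G.inv f)), ← G.inv_comp f, ← G.comp_assoc,
    G.inv_comp, G.id_comp]

theorem inv_comp_cancel {x y z} (f : G.Hom x y) (h : G.Hom z x) :
    G.comp (G.inv f) (G.comp f h) = h := by
  rw [← G.comp_assoc, G.inv_comp, G.id_comp]

theorem comp_inv_cancel {x y z} (f : G.Hom x y) (h : G.Hom z y) :
    G.comp f (G.comp (G.inv f) h) = h := by
  rw [← G.comp_assoc, G.comp_inv, G.id_comp]

theorem inv_eq_of_comp {x y} {f : G.Hom x y} {h : G.Hom y x}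
    (e : G.comp f h = G.id y) : h = G.inv f := by
  rw [← G.id_comp h, ← G.inv_comp f, G.comp_assoc, e, G.comp_id]

theorem inv_comp' {x y z} (g : G.Hom y z) (f : G.Hom x y) :
    G.inv (G.comp g f) = G.comp (G.inv f) (G.inv g) := by
  symm; apply G.inv_eq_of_comp
  rw [G.comp_assoc, ← G.comp_assoc f, G.comp_inv, G.id_comp, G.comp_inv]

theorem D_inv2 {x} (a : G.G2 x) : G.D (G.inv2 a) = G.inv (G.D a) := by
  apply G.inv_eq_of_comp
  rw [← G.D_mul, G.mul_inv2, G.D_one]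

theorem hcast_eq_of_heq {x x' y y' : G.Obj} (ex : x = x') (ey : y = y')
    {h : G.Hom x y} {h' : G.Hom x' y'} (H : HEq h h') : G.hcast ex ey h = h' := by
  subst ex; subst ey; exact eq_of_heq H

theorem hcast_comp {x x' y y' z z' : G.Obj} (ex : x = x') (ey : y = y') (ez : z = z')
    (k : G.Hom y z) (h : G.Hom x y) :
    G.hcast ex ez (G.comp k h) = G.comp (G.hcast ey ez k) (G.hcast ex ey h) := by
  subst ex; subst ey; subst ez; rfl

theorem hcast_inv {x x' y y' : G.Obj} (ex : x = x') (ey : y = y') (h : G.Hom x y) :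
    G.hcast ey ex (G.inv h) = G.inv (G.hcast ex ey h) := by
  subst ex; subst ey; rfl

theorem hcast_D {x x' : G.Obj} (e : x = x') (a : G.G2 x) :
    G.hcast e e (G.D a) = G.D (G.cast2 e a) := by
  subst e; rfl

theorem cast2_mul {x x' : G.Obj} (e : x = x') (a b : G.G2 x) :
    G.cast2 e (G.mul a b) = G.mul (G.cast2 e a) (G.cast2 e b) := by
  subst e; rfl

theorem cast2_inv2 {x x' : G.Obj} (e : x = x') (a : G.G2 x) :
    G.cast2 e (G.inv2 a) = G.inv2 (G.cast2 e a) := by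
  subst e; rfl

theorem cast2_Ad {x x' y y' : G.Obj} (ex : x = x') (ey : y = y')
    (g : G.Hom x y) (a : G.G2 x) :
    G.cast2 ey (G.Ad g a) = G.Ad (G.hcast ex ey g) (G.cast2 ex a) := by
  subst ex; subst ey; rfl

/-- The key part-(i) computation for `gauge_inv`, in an abstract crossed groupoid. -/
theorem gauge_inv_key1 {y0 y1 y0' y1' : G.Obj}
    (F0 : G.Hom y0 y0') (F1 : G.Hom y1 y1') (g : G.Hom y0 y1) (c : G.G2 y0) :
    g = G.comp (G.comp (G.comp (G.inv F1)
        (G.comp (G.comp (G.comp F1 g) (G.D c)) (G.inv F0)))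
        (G.D (G.Ad F0 (G.inv2 c)))) (G.inv (G.inv F0)) := by
  rw [G.D_Ad, G.D_inv2, G.inv_inv]
  simp only [G.comp_assoc, G.inv_comp_cancel, G.comp_inv_cancel, G.inv_comp, G.comp_inv,
    G.comp_id, G.id_comp]

/-- The key part-(ii) computation for `gauge_inv`, in an abstract crossed groupoid. -/
theorem gauge_inv_key2 {y0 y1 y0' y1' : G.Obj}
    (F0 : G.Hom y0 y0') (F1 : G.Hom y1 y1') (Gg : G.Hom y0 y1)
    (a C01 C02 : G.G2 y0) (C12 : G.G2 y1) :
    a = G.Ad (G.inv F0) (G.mul (G.mul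
        (G.mul (G.inv2 (G.Ad F0 (G.inv2 C02)))
          (G.Ad F0 (G.mul (G.mul (G.mul (G.inv2 C02) a) (G.Ad (G.inv Gg) C12)) C01)))
        (G.Ad (G.inv (G.comp (G.comp (G.comp F1 Gg) (G.D C01)) (G.inv F0)))
          (G.Ad F1 (G.inv2 C12))))
        (G.Ad F0 (G.inv2 C01))) := by
  -- expand the inverse of the composite and the adjoint action
  rw [G.inv_comp', G.inv_comp', G.inv_comp', G.inv_inv]
  rw [G.Ad_comp, G.Ad_comp, G.Ad_comp, G.Ad_inv_Ad F1]
  -- turn `inv (D C01)` into `D (inv2 C01)` and apply Peiffer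
  rw [← G.D_inv2, G.peiffer, G.inv2_inv2]
  -- collect all the `Ad F0` factors
  rw [← G.Ad_inv2 F0, G.inv2_inv2, ← G.Ad_mul, ← G.Ad_mul, ← G.Ad_mul, G.Ad_inv_Ad F0]
  -- now a pure group computation
  rw [G.Ad_inv2 (G.inv Gg)]
  simp only [G.mul_assoc, G.inv2_mul_cancel, G.mul_inv2_cancel, G.mul_inv2, G.inv2_mul,
    G.mul_one, G.one_mul]

end CrossedGroupoid

namespace CrossedGroupoidHom

variable {G H : CrossedGroupoid} (F : CrossedGroupoidHom G H)

theorem map1_inv {x y : G.Obj} (f : G.Hom x y) :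
    F.map1 (G.inv f) = H.inv (F.map1 f) := by
  apply H.inv_eq_of_comp
  rw [← F.map1_comp, G.comp_inv, F.map1_id]

theorem map1_heq {F F' : CrossedGroupoidHom G H} (E : F = F') {x y : G.Obj}
    (f : G.Hom x y) : HEq (F.map1 f) (F'.map1 f) := by subst E; rfl

theorem map2_one (x : G.Obj) : F.map2 (G.one x) = H.one (F.obj x) := by
  have h1 : F.map2 (G.one x) = H.mul (F.map2 (G.one x)) (F.map2 (G.one x)) := by
    rw [← F.map2_mul, G.one_mul]
  calc F.map2 (G.one x)
      = H.mul (H.inv2 (F.map2 (G.one x)))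
          (H.mul (F.map2 (G.one x)) (F.map2 (G.one x))) := by rw [H.inv2_mul_cancel]
    _ = H.mul (H.inv2 (F.map2 (G.one x))) (F.map2 (G.one x)) := by rw [← h1]
    _ = H.one _ := H.inv2_mul _

theorem map2_inv2 {x : G.Obj} (a : G.G2 x) :
    F.map2 (G.inv2 a) = H.inv2 (F.map2 a) := by
  apply H.inv2_eq_of_mul
  rw [← F.map2_mul, G.mul_inv2, F.map2_one]

end CrossedGroupoidHom

namespace CosimplicialCrossedGroupoid

variable (G : CosimplicialCrossedGroupoid)

/-- Pushing a 1-morphism between vertex objects over possibly different base objects. -/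
def push1x {x x' : (G.obj 0).Obj} {p q : ℕ} (α : Fin (p + 1) →o Fin (q + 1))
    {i j : Fin (p + 1)} (h : (G.obj p).Hom (G.X x p i) (G.X x' p j)) :
    (G.obj q).Hom (G.X x q (α i)) (G.X x' q (α j)) :=
  (G.obj q).hcast (G.X_push x α i) (G.X_push x' α j) ((G.map α).map1 h)

theorem push1_eq_push1x {x : (G.obj 0).Obj} {p q : ℕ} (α : Fin (p + 1) →o Fin (q + 1))
    {i j : Fin (p + 1)} (h : (G.obj p).Hom (G.X x p i) (G.X x p j)) :
    G.push1 α h = G.push1x α h := rfl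

theorem push1x_comp {x x' x'' : (G.obj 0).Obj} {p q : ℕ}
    (α : Fin (p + 1) →o Fin (q + 1)) {i j k : Fin (p + 1)}
    (g : (G.obj p).Hom (G.X x' p j) (G.X x'' p k))
    (h : (G.obj p).Hom (G.X x p i) (G.X x' p j)) :
    G.push1x α ((G.obj p).comp g h)
      = (G.obj q).comp (G.push1x α g) (G.push1x α h) := by
  unfold push1x
  rw [(G.map α).map1_comp, (G.obj q).hcast_comp _ (G.X_push x' α j)]

theorem push1x_inv {x x' : (G.obj 0).Obj} {p q : ℕ} (α : Fin (p + 1) →o Fin (q + 1))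
    {i j : Fin (p + 1)} (h : (G.obj p).Hom (G.X x p i) (G.X x' p j)) :
    G.push1x α ((G.obj p).inv h) = (G.obj q).inv (G.push1x α h) := by
  unfold push1x
  rw [(G.map α).map1_inv, (G.obj q).hcast_inv]

theorem push1x_D {x : (G.obj 0).Obj} {p q : ℕ} (α : Fin (p + 1) →o Fin (q + 1))
    {i : Fin (p + 1)} (a : (G.obj p).G2 (G.X x p i)) :
    G.push1x α ((G.obj p).D a) = (G.obj q).D (G.push2 α a) := by
  unfold push1x push2
  rw [(G.map α).map_D, (G.obj q).hcast_D]

theorem push2_inv2 {x : (G.obj 0).Obj} {p q : ℕ} (α : Fin (p + 1) →o Fin (q + 1))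
    {i : Fin (p + 1)} (a : (G.obj p).G2 (G.X x p i)) :
    G.push2 α ((G.obj p).inv2 a) = (G.obj q).inv2 (G.push2 α a) := by
  unfold push2
  rw [(G.map α).map2_inv2, (G.obj q).cast2_inv2]

theorem push2_Ad {x x' : (G.obj 0).Obj} {p q : ℕ} (α : Fin (p + 1) →o Fin (q + 1))
    {i j : Fin (p + 1)} (h : (G.obj p).Hom (G.X x p i) (G.X x' p j))
    (a : (G.obj p).G2 (G.X x p i)) :
    G.push2 α ((G.obj p).Ad h a) = (G.obj q).Ad (G.push1x α h) (G.push2 α a) := by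
  unfold push2 push1x
  rw [(G.map α).map_Ad, (G.obj q).cast2_Ad (G.X_push x α i)]

theorem push1x_vtx {x x' : (G.obj 0).Obj} {p q : ℕ} (α : Fin (p + 1) →o Fin (q + 1))
    (i : Fin (p + 1)) (f : (G.obj 0).Hom x x') :
    G.push1x α ((G.map (vtxMap i)).map1 f) = (G.map (vtxMap (α i))).map1 f := by
  apply (G.obj q).hcast_eq_of_heq
  have E : G.map (vtxMap (α i)) = (G.map α).comp (G.map (vtxMap i)) :=
    G.map_comp α (vtxMap i)
  exact CrossedGroupoidHom.map1_heq E.symm f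

end CosimplicialCrossedGroupoid

/-- the inverse of a gauge transformation:
(f⁻¹, Ad(f_(0))(c⁻¹)) is a gauge transformation (x',g',a') → (x,g,a). -/
theorem gauge_inv (G : CosimplicialCrossedGroupoid) (P P' : G.Desc)
    (f : (G.obj 0).Hom P.x P'.x) (c : (G.obj 1).G2 (G.X P.x 1 0))
    (hfc : G.IsGauge P.x P.g P.a P'.x P'.g P'.a f c) :
    G.IsGauge P'.x P'.g P'.a P.x P.g P.a ((G.obj 0).inv f)
      ((G.obj 1).Ad ((G.map (vtxMap (0 : Fin 2))).map1 f) ((G.obj 1).inv2 c)) := by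
  obtain ⟨h1, h2⟩ := hfc
  constructor
  · rw [(G.map (vtxMap (1 : Fin 2))).map1_inv, (G.map (vtxMap (0 : Fin 2))).map1_inv, h1]
    exact (G.obj 1).gauge_inv_key1 ((G.map (vtxMap (0 : Fin 2))).map1 f)
      ((G.map (vtxMap (1 : Fin 2))).map1 f) P.g c
  · rw [(G.map (vtxMap (0 : Fin 3))).map1_inv, h1, h2]
    simp only [G.push1_eq_push1x, G.push1x_comp, G.push1x_inv, G.push1x_D, G.push2_Ad,
      G.push2_inv2, G.push1x_vtx]
    erw [G.push1_eq_push1x, G.push1x_comp, G.push1x_comp, G.push1x_comp, G.push1x_inv, G.push1x_D, G.push1x_vtx, G.push1x_vtx, G.push2_Ad, G.push2_Ad, G.push2_inv2, G.push2_inv2, G.push1x_vtx, G.push1x_vtx, G.push2_Ad, G.push2_inv2, G.push1x_vtx]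
    exact (G.obj 2).gauge_inv_key2 ((G.map (vtxMap (0 : Fin 3))).map1 f)
      ((G.map (vtxMap (1 : Fin 3))).map1 f)
      (G.push1 (edgeMap 0 1 (by decide)) P.g) P.a
      (G.push2 (edgeMap 0 1 (by decide)) c) (G.push2 (edgeMap 0 2 (by decide)) c)
      (G.push2 (edgeMap 1 2 (by decide)) c)
end

section
/- If F : G → H is a weak equivalence of crossed groupoids, x, x' are objects of G, and g, g' ∈ G₁(x,x'), then the induced map F : {a ∈ G₂(x) : g' = g ∘ D(a)} → {b ∈ H₂(F(x)) : F(g') = F(g) ∘ D(b)} is bijective. -/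
/-! ### Auxiliary lemmas for the proof of `twist_set_bijective` -/

/-- The group structure on `G.G2 x`. -/
def g2Group (G : CrossedGroupoid) (x : G.Obj) : Group (G.G2 x) :=
  letI : Mul (G.G2 x) := ⟨G.mul⟩
  letI : One (G.G2 x) := ⟨G.one x⟩
  letI : Inv (G.G2 x) := ⟨G.inv2⟩
  Group.ofLeftAxioms G.mul_assoc G.one_mul G.inv2_mul

section Aux

variable {G H : CrossedGroupoid}

theorem mul_inv2 {x : G.Obj} (a : G.G2 x) : G.mul a (G.inv2 a) = G.one x := by
  letI := g2Group G x
  exact mul_inv_cancel a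

theorem D_inv2 {x : G.Obj} (a : G.G2 x) : G.D (G.inv2 a) = G.inv (G.D a) := by
  have h : G.comp (G.D (G.inv2 a)) (G.D a) = G.id x := by
    rw [← G.D_mul, G.inv2_mul, G.D_one]
  calc G.D (G.inv2 a) = G.comp (G.D (G.inv2 a)) (G.comp (G.D a) (G.inv (G.D a))) := by
        rw [G.comp_inv, G.comp_id]
    _ = G.comp (G.comp (G.D (G.inv2 a)) (G.D a)) (G.inv (G.D a)) := by rw [G.comp_assoc]
    _ = G.inv (G.D a) := by rw [h, G.id_comp]

theorem comp_cancel_left {x y z : G.Obj} (g : G.Hom y z) {h h' : G.Hom x y}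
    (e : G.comp g h = G.comp g h') : h = h' := by
  have := congrArg (G.comp (G.inv g)) e
  rwa [← G.comp_assoc, ← G.comp_assoc, G.inv_comp, G.id_comp, G.id_comp] at this

theorem homRel_equiv (x x' : G.Obj) : Equivalence (G.homRel x x') := by
  constructor
  · intro g; exact ⟨G.one x, by rw [G.D_one, G.comp_id]⟩
  · rintro g g' ⟨a, rfl⟩
    exact ⟨G.inv2 a, by rw [D_inv2, G.comp_assoc, G.comp_inv, G.comp_id]⟩
  · rintro g g' g'' ⟨a, rfl⟩ ⟨b, rfl⟩
    exact ⟨G.mul a b, by rw [G.D_mul, G.comp_assoc]⟩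

theorem map2_one (F : CrossedGroupoidHom G H) (x : G.Obj) :
    F.map2 (G.one x) = H.one (F.obj x) := by
  letI := g2Group H (F.obj x)
  have h : H.mul (F.map2 (G.one x)) (F.map2 (G.one x))
      = H.mul (F.map2 (G.one x)) (H.one (F.obj x)) := by
    rw [← F.map2_mul, G.one_mul, H.mul_one]
  exact mul_left_cancel h

theorem map2_inv2 (F : CrossedGroupoidHom G H) {x : G.Obj} (a : G.G2 x) :
    F.map2 (G.inv2 a) = H.inv2 (F.map2 a) := by
  letI := g2Group H (F.obj x)
  have h : H.mul (F.map2 (G.inv2 a)) (F.map2 a) = H.one (F.obj x) := by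
    rw [← F.map2_mul, G.inv2_mul, map2_one]
  exact eq_inv_of_mul_eq_one_left h

theorem map1_inv (F : CrossedGroupoidHom G H) {x y : G.Obj} (f : G.Hom x y) :
    F.map1 (G.inv f) = H.inv (F.map1 f) := by
  have h : H.comp (F.map1 (G.inv f)) (F.map1 f) = H.id (F.obj x) := by
    rw [← F.map1_comp, G.inv_comp, F.map1_id]
  calc F.map1 (G.inv f)
      = H.comp (F.map1 (G.inv f)) (H.comp (F.map1 f) (H.inv (F.map1 f))) := by
        rw [H.comp_inv, H.comp_id]
    _ = H.comp (H.comp (F.map1 (G.inv f)) (F.map1 f)) (H.inv (F.map1 f)) := by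
        rw [H.comp_assoc]
    _ = H.inv (F.map1 f) := by rw [h, H.id_comp]

end Aux

/-- Lemma 2.6, second part: a weak equivalence induces a bijection
{a ∈ 𝒢₂(x) : g' = g ∘ D(a)} → {b ∈ ℋ₂(F x) : F g' = F g ∘ D(b)}. -/
theorem twist_set_bijective {G H : CrossedGroupoid} (F : CrossedGroupoidHom G H)
    (hF : F.IsWeakEquiv) (x x' : G.Obj) (g g' : G.Hom x x') :
    Function.Bijective (fun a : {a : G.G2 x // g' = G.comp g (G.D a)} =>
      (⟨F.map2 a.1, (congrArg (fun t => F.map1 t) a.2).trans (by rw [F.map1_comp, F.map_D])⟩ :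
        {b : H.G2 (F.obj x) // F.map1 g' = H.comp (F.map1 g) (H.D b)})) := by
  constructor
  · -- injectivity
    rintro ⟨a, ha⟩ ⟨a', ha'⟩ hFa
    have hFa' : F.map2 a = F.map2 a' := congrArg Subtype.val hFa
    have hD : G.D a = G.D a' := comp_cancel_left g (ha.symm.trans ha')
    -- the element (inv2 a) * a' lies in π₂
    have hker : G.D (G.mul (G.inv2 a) a') = G.id x := by
      rw [G.D_mul, ← hD, ← G.D_mul, G.inv2_mul, G.D_one]
    have h2 : F.pi2map x ⟨G.mul (G.inv2 a) a', hker⟩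
        = F.pi2map x ⟨G.one x, G.D_one x⟩ := by
      apply Subtype.ext
      show F.map2 (G.mul (G.inv2 a) a') = F.map2 (G.one x)
      rw [F.map2_mul, ← hFa', ← F.map2_mul, G.inv2_mul]
    have h3 := (hF.2.2 x).1 h2
    have h4 : G.mul (G.inv2 a) a' = G.one x := congrArg Subtype.val h3
    apply Subtype.ext
    show a = a'
    letI := g2Group G x
    exact inv_mul_eq_one.mp h4
  · -- surjectivity
    rintro ⟨b, hb⟩
    set h : G.Hom x x := G.comp (G.inv g) g' with hh
    have hFh : F.map1 h = H.D b := by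
      rw [hh, F.map1_comp, map1_inv, hb, ← H.comp_assoc, H.inv_comp, H.id_comp]
    -- [h] = [id] in π₁(G, x)
    have h1 : F.pi1map x (Quot.mk _ h) = F.pi1map x (Quot.mk _ (G.id x)) := by
      show Quot.mk _ (F.map1 h) = Quot.mk _ (F.map1 (G.id x))
      rw [F.map1_id]
      exact Quot.sound ⟨H.inv2 b, by rw [hFh, D_inv2, H.comp_inv]⟩
    have h2 : Quot.mk (G.homRel x x) (G.id x) = Quot.mk (G.homRel x x) h :=
      ((hF.2.1 x).1 h1).symm
    obtain ⟨a₀, ha₀⟩ : G.homRel x x (G.id x) h :=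
      ((homRel_equiv x x).eqvGen_iff).mp (Quot.eqvGen_exact h2)
    rw [G.id_comp] at ha₀
    -- so h = D a₀, hence g' = g ∘ D a₀
    have hg' : g' = G.comp g (G.D a₀) := by
      rw [← ha₀, hh, ← G.comp_assoc, G.comp_inv, G.id_comp]
    have hDb : H.D (F.map2 a₀) = H.D b := by
      rw [← F.map_D, ← ha₀, hFh]
    -- b * (F a₀)⁻¹ lies in π₂(H, Fx)
    have hker : H.D (H.mul b (H.inv2 (F.map2 a₀))) = H.id (F.obj x) := by
      rw [H.D_mul, D_inv2, hDb, H.comp_inv]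
    obtain ⟨e, he⟩ := (hF.2.2 x).2 ⟨H.mul b (H.inv2 (F.map2 a₀)), hker⟩
    have he1 : F.map2 e.1 = H.mul b (H.inv2 (F.map2 a₀)) := congrArg Subtype.val he
    refine ⟨⟨G.mul e.1 a₀, ?_⟩, ?_⟩
    · rw [G.D_mul, e.2, G.id_comp]; exact hg'
    · apply Subtype.ext
      show F.map2 (G.mul e.1 a₀) = b
      rw [F.map2_mul, he1]
      letI := g2Group H (F.obj x)
      show H.mul (H.mul b (H.inv2 (F.map2 a₀))) (F.map2 a₀) = b
      exact inv_mul_cancel_right b (F.map2 a₀)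
end
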